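/- The joint optimization of the non-linear harvested power over (X, α) decouples: the optimal value of max over PSD X with tr(X) ≤ P_max and row-stochastic α of Σ_l f_l(Σ_n α_{nl}·h_n^H X h_n) equals max over φ ≥ 0 with Σ_l φ_l ≤ P_max·λ_max(H^H H) of Σ_l f_l(φ_l), where each f_l is increasing. -/

import Mathlib

open scoped ComplexOrder
open Matrix

lemma aux_sum_quad {M N : ℕ} (h : Fin N → Fin M → ℂ)
    (H : Matrix (Fin N) (Fin M) ℂ) (hH : ∀ n m, H n m = star (h n m))
    (X : Matrix (Fin M) (Fin M) ℂ) :
    ∑ n, (star (h n) ⬝ᵥ X.mulVec (h n)) = (Hᴴ * H * X).trace := by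
  rw [Matrix.mul_assoc, Matrix.trace_mul_comm]
  simp only [Matrix.trace, Matrix.diag, Matrix.mul_apply, Matrix.conjTranspose_apply,
    dotProduct, Matrix.mulVec, hH, Finset.mul_sum, Finset.sum_mul, Pi.star_apply]
  refine Finset.sum_congr rfl fun n _ => ?_
  rw [Finset.sum_comm]
  refine Finset.sum_congr rfl fun m _ => Finset.sum_congr rfl fun k _ => ?_
  simp only [star_star]
  ring

lemma aux_diag_nonneg {M : ℕ} {Y : Matrix (Fin M) (Fin M) ℂ} (hY : Y.PosSemidef) (i : Fin M) :
    0 ≤ (Y i i).re ∧ (Y i i).im = 0 := by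
  have h0 := hY.dotProduct_mulVec_nonneg (Pi.single i 1)
  have hval : star (Pi.single i 1) ⬝ᵥ Y *ᵥ Pi.single i 1 = Y i i := by
    simp [Matrix.mulVec_single, dotProduct, Pi.single_apply, apply_ite]
  rw [hval, Complex.le_def] at h0
  refine ⟨?_, h0.2.symm⟩
  simpa using h0.1

lemma aux_trace_bound {M : ℕ} (hM : 0 < M) {A : Matrix (Fin M) (Fin M) ℂ}
    (hA : A.IsHermitian)
    {X : Matrix (Fin M) (Fin M) ℂ} (hX : X.PosSemidef) :
    (A * X).trace.re ≤ (⨆ i, hA.eigenvalues i) * X.trace.re := by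
  haveI : Nonempty (Fin M) := Fin.pos_iff_nonempty.mp hM
  set U : Matrix (Fin M) (Fin M) ℂ := (hA.eigenvectorUnitary : Matrix (Fin M) (Fin M) ℂ) with hU
  set D : Matrix (Fin M) (Fin M) ℂ := Matrix.diagonal (RCLike.ofReal ∘ hA.eigenvalues) with hD
  have hspec : A = U * D * star U := hA.spectral_theorem
  set Y : Matrix (Fin M) (Fin M) ℂ := (star U) * X * U with hY
  have hYpsd : Y.PosSemidef := by
    have := hX.conjTranspose_mul_mul_same U
    simpa [hY, Matrix.star_eq_conjTranspose] using this
  have hUU : U * star U = 1 := (Matrix.mem_unitaryGroup_iff).mp hA.eigenvectorUnitary.2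
  have htr : (A * X).trace = (D * Y).trace := by
    rw [hspec, hY]
    simp only [Matrix.mul_assoc]
    rw [Matrix.trace_mul_comm]
    simp only [Matrix.mul_assoc]
  have htrY : Y.trace = X.trace := by
    rw [hY, Matrix.trace_mul_comm, ← Matrix.mul_assoc, hUU, Matrix.one_mul]
  have hDY : (D * Y).trace = ∑ i, (hA.eigenvalues i : ℂ) * Y i i := by
    simp [Matrix.trace, Matrix.diag, Matrix.mul_apply, hD, Matrix.diagonal]
  have hsup : ∀ i, hA.eigenvalues i ≤ ⨆ j, hA.eigenvalues j := fun i =>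
    le_ciSup (Set.Finite.bddAbove (Set.finite_range _)) i
  rw [htr, hDY, ← htrY]
  have htrYre : Y.trace.re = ∑ i, (Y i i).re := by
    simp [Matrix.trace, Matrix.diag]
  rw [Complex.re_sum, htrYre, Finset.mul_sum]
  refine Finset.sum_le_sum fun i _ => ?_
  have hre : ((hA.eigenvalues i : ℂ) * Y i i).re = hA.eigenvalues i * (Y i i).re := by
    simp [Complex.mul_re]
  rw [hre]
  exact mul_le_mul_of_nonneg_right (hsup i) (aux_diag_nonneg hYpsd i).1

lemma aux_rank_one {M : ℕ} {A : Matrix (Fin M) (Fin M) ℂ} {u : Fin M → ℂ}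
    (hu : ∑ m, Complex.normSq (u m) = 1) {lam : ℝ} (heig : A.mulVec u = lam • u)
    {c : ℝ} (hc : 0 ≤ c) :
    (Matrix.of fun m k => (c:ℂ) * (u m * star (u k))).PosSemidef ∧
    (Matrix.of fun m k => (c:ℂ) * (u m * star (u k))).trace = (c:ℂ) ∧
    (A * Matrix.of fun m k => (c:ℂ) * (u m * star (u k))).trace = ((c:ℂ) * lam) := by
  set X : Matrix (Fin M) (Fin M) ℂ := Matrix.of fun m k => (c:ℂ) * (u m * star (u k)) with hX
  have husum : ∑ m, u m * star (u m) = 1 := by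
    have : ∀ m, u m * star (u m) = ((Complex.normSq (u m) : ℝ) : ℂ) := by
      intro m; simp [Complex.star_def, Complex.mul_conj]
    rw [Finset.sum_congr rfl fun m _ => this m]
    rw [← Complex.ofReal_sum, hu, Complex.ofReal_one]
  refine ⟨?_, ?_, ?_⟩
  · set B : Matrix (Fin 1) (Fin M) ℂ := Matrix.of fun _ m => (Real.sqrt c : ℂ) * star (u m) with hB
    have hXB : X = Bᴴ * B := by
      ext m k
      simp only [hX, hB, Matrix.mul_apply, Matrix.conjTranspose_apply, Matrix.of_apply,
        Fin.sum_univ_one, star_mul', star_star, Complex.star_def, Complex.conj_ofReal]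
      have hcc : (Real.sqrt c : ℂ) * (Real.sqrt c : ℂ) = (c : ℂ) := by
        rw [← Complex.ofReal_mul, Real.mul_self_sqrt hc]
      rw [← hcc]; simp only [Complex.conj_conj]; ring
    rw [hXB]
    exact Matrix.posSemidef_conjTranspose_mul_self B
  · have : X.trace = (c:ℂ) * ∑ m, u m * star (u m) := by
      simp only [hX, Matrix.trace, Matrix.diag, Matrix.of_apply, Finset.mul_sum]
    rw [this, husum, mul_one]
  · have hAX : (A * X).trace = (c:ℂ) * ∑ m, (star (u m)) * (A.mulVec u) m := by
      simp only [Matrix.trace, Matrix.diag, Matrix.mul_apply, hX, Matrix.of_apply,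
        Matrix.mulVec, dotProduct, Finset.mul_sum]
      refine Finset.sum_congr rfl fun m _ => Finset.sum_congr rfl fun k _ => by ring
    rw [hAX, heig]
    have : ∑ m, (star (u m)) * ((lam • u) m) = (lam : ℂ) * ∑ m, u m * star (u m) := by
      simp only [Pi.smul_apply, Finset.mul_sum, Complex.real_smul]
      exact Finset.sum_congr rfl fun m _ => by ring
    rw [this, husum, mul_one]

theorem stmt_12 {M N L : ℕ} (hM : 0 < M) (hN : 0 < N) (hL : 0 < L)
    (h : Fin N → Fin M → ℂ) (H : Matrix (Fin N) (Fin M) ℂ)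
    (hH : ∀ n m, H n m = star (h n m))
    (f : Fin L → ℝ → ℝ) (hf : ∀ l, Monotone (f l))
    (Pmax : ℝ) (hP : 0 < Pmax)
    (hA : (Hᴴ * H).IsHermitian) :
    haveI : Nonempty (Fin M) := Fin.pos_iff_nonempty.mp hM
    sSup {v : ℝ | ∃ (X : Matrix (Fin M) (Fin M) ℂ) (α : Fin N → Fin L → ℝ),
        X.PosSemidef ∧ (X.trace).re ≤ Pmax ∧
        (∀ n l, 0 ≤ α n l ∧ α n l ≤ 1) ∧ (∀ n, ∑ l, α n l = 1) ∧
        v = ∑ l, f l (∑ n, α n l * (star (h n) ⬝ᵥ X.mulVec (h n)).re)} =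
      sSup {v : ℝ | ∃ φ : Fin L → ℝ, (∀ l, 0 ≤ φ l) ∧
        (∑ l, φ l ≤ Pmax * ⨆ i, hA.eigenvalues i) ∧ v = ∑ l, f l (φ l)} := by
  haveI : Nonempty (Fin M) := Fin.pos_iff_nonempty.mp hM
  haveI : Nonempty (Fin L) := Fin.pos_iff_nonempty.mp hL
  have hpsd : (Hᴴ * H).PosSemidef := Matrix.posSemidef_conjTranspose_mul_self H
  set lmax : ℝ := ⨆ i, hA.eigenvalues i with hlmax
  have hl0 : 0 ≤ lmax := by
    obtain ⟨i0⟩ := (inferInstance : Nonempty (Fin M))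
    exact le_trans (hpsd.eigenvalues_nonneg i0)
      (le_ciSup (Set.Finite.bddAbove (Set.finite_range _)) i0)
  congr 1
  ext v
  constructor
  · rintro ⟨X, α, hXpsd, hXtr, hαb, hαs, rfl⟩
    have hq : ∀ n, 0 ≤ (star (h n) ⬝ᵥ X.mulVec (h n)).re := by
      intro n
      have := hXpsd.dotProduct_mulVec_nonneg (h n)
      rw [Complex.le_def] at this
      simpa using this.1
    refine ⟨fun l => ∑ n, α n l * (star (h n) ⬝ᵥ X.mulVec (h n)).re, ?_, ?_, rfl⟩
    · intro l
      exact Finset.sum_nonneg fun n _ => mul_nonneg (hαb n l).1 (hq n)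
    · have h1 : ∑ l, ∑ n, α n l * (star (h n) ⬝ᵥ X.mulVec (h n)).re
          = ∑ n, (star (h n) ⬝ᵥ X.mulVec (h n)).re := by
        rw [Finset.sum_comm]
        refine Finset.sum_congr rfl fun n _ => ?_
        rw [← Finset.sum_mul, hαs n, one_mul]
      rw [h1]
      have h2 : ∑ n, (star (h n) ⬝ᵥ X.mulVec (h n)).re = ((Hᴴ * H * X).trace).re := by
        rw [← Complex.re_sum, aux_sum_quad h H hH X]
      rw [h2]
      calc ((Hᴴ * H * X).trace).re ≤ lmax * X.trace.re := aux_trace_bound hM hA hXpsd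
        _ ≤ lmax * Pmax := mul_le_mul_of_nonneg_left hXtr hl0
        _ = Pmax * lmax := mul_comm _ _
  · rintro ⟨φ, hφ0, hφs, rfl⟩
    set S : ℝ := ∑ l, φ l with hS
    have hS0 : 0 ≤ S := Finset.sum_nonneg fun l _ => hφ0 l
    rcases eq_or_lt_of_le hS0 with hSz | hSpos
    · -- S = 0, hence φ = 0
      have hφz : ∀ l, φ l = 0 := by
        intro l
        have := (Finset.sum_eq_zero_iff_of_nonneg (fun l _ => hφ0 l)).mp hSz.symm
        exact this l (Finset.mem_univ l)
      refine ⟨0, fun n l => (L : ℝ)⁻¹, Matrix.PosSemidef.zero, by simp [hP.le], ?_, ?_, ?_⟩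
      · intro n l
        constructor
        · positivity
        · rw [inv_le_one_iff₀]
          right
          exact_mod_cast hL
      · intro n
        simp [Finset.card_univ]
        rw [mul_inv_cancel₀]
        exact_mod_cast hL.ne'
      · refine Finset.sum_congr rfl fun l _ => ?_
        rw [hφz l]
        congr 1
        simp [Matrix.zero_mulVec]
    · -- S > 0
      have hlpos : 0 < lmax := by
        by_contra hcon
        push_neg at hcon
        have : Pmax * lmax ≤ 0 := mul_nonpos_of_nonneg_of_nonpos hP.le hcon
        linarith
      obtain ⟨i0, hi0⟩ := exists_eq_ciSup_of_finite (f := hA.eigenvalues)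
      set u : Fin M → ℂ := ⇑(hA.eigenvectorBasis i0) with hu
      have hunorm : ∑ m, Complex.normSq (u m) = 1 := by
        have hn1 : ‖hA.eigenvectorBasis i0‖ = 1 := hA.eigenvectorBasis.orthonormal.1 i0
        rw [EuclideanSpace.norm_eq] at hn1
        have : ∑ m, ‖hA.eigenvectorBasis i0 m‖ ^ 2 = 1 := by
          have := congrArg (· ^ 2) hn1
          simpa [Real.sq_sqrt (Finset.sum_nonneg fun m _ => sq_nonneg _)] using this
        rw [← this]
        refine Finset.sum_congr rfl fun m _ => ?_
        rw [Complex.normSq_eq_norm_sq]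
      have heig : (Hᴴ * H).mulVec u = lmax • u := by
        rw [hlmax, ← hi0]
        exact hA.mulVec_eigenvectorBasis i0
      set c : ℝ := S / lmax with hc
      have hc0 : 0 ≤ c := div_nonneg hS0 hl0
      have hcP : c ≤ Pmax := by
        rw [hc, div_le_iff₀ hlpos]
        linarith [hφs]
      obtain ⟨hXpsd, hXtr, hAX⟩ := aux_rank_one hunorm heig hc0
      set X : Matrix (Fin M) (Fin M) ℂ := Matrix.of fun m k => (c:ℂ) * (u m * star (u k)) with hX
      have hqsum : ∑ n, (star (h n) ⬝ᵥ X.mulVec (h n)).re = S := by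
        rw [← Complex.re_sum, aux_sum_quad h H hH X, hAX]
        have : (c : ℂ) * (lmax : ℂ) = ((c * lmax : ℝ) : ℂ) := by push_cast; ring
        rw [this, Complex.ofReal_re, hc, div_mul_cancel₀ _ hlpos.ne']
      refine ⟨X, fun n l => φ l / S, hXpsd, ?_, ?_, ?_, ?_⟩
      · rw [hXtr]; simpa using hcP
      · intro n l
        refine ⟨div_nonneg (hφ0 l) hS0, ?_⟩
        rw [div_le_one hSpos]
        exact Finset.single_le_sum (fun l _ => hφ0 l) (Finset.mem_univ l)
      · intro n
        rw [← Finset.sum_div, ← hS, div_self hSpos.ne']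
      · refine Finset.sum_congr rfl fun l _ => ?_
        congr 1
        have : ∑ n, φ l / S * (star (h n) ⬝ᵥ X.mulVec (h n)).re
            = (φ l / S) * ∑ n, (star (h n) ⬝ᵥ X.mulVec (h n)).re := by
          rw [Finset.mul_sum]
        rw [this, hqsum, div_mul_cancel₀ _ hSpos.ne']
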